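/- Let G be a complete graph on 14 vertices whose edges are red-blue colored with no monochromatic copy of the fan F_3, and let H be a set of 5 vertices inducing a blue complete graph K_5, with K = V(G) \ H. Then for any two vertices v_1, v_2 of K that have a common blue neighbor in H and that each have at least 2 blue neighbors in H, the union of the blue neighborhoods of v_1 and v_2 in H has exactly 2 elements. -/

import Mathlib

/-- The fan `F n = K₁ + n·K₂`: vertex 0 is the center, and vertices
`2k+1, 2k+2` form the `k`-th edge of the matching, for `k < n`. -/
def fanGraph (n : ℕ) : SimpleGraph (Fin (2 * n + 1)) where
  Adj v w := v ≠ w ∧ (v = 0 ∨ w = 0 ∨ (v.val - 1) / 2 = (w.val - 1) / 2)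
  symm := by
    constructor
    intro v w h
    obtain ⟨h1, h2⟩ := h
    refine ⟨h1.symm, ?_⟩
    tauto
  loopless := by constructor; intro v h; exact h.1 rfl

/-- `ContainsCopy G H` : `G` contains a subgraph isomorphic to `H`
(an injective map of vertices sending edges of `H` to edges of `G`). -/
def ContainsCopy {α β : Type*} (G : SimpleGraph α) (H : SimpleGraph β) : Prop :=
  ∃ f : β ↪ α, ∀ ⦃a b : β⦄, H.Adj a b → G.Adj (f a) (f b)

instance (n : ℕ) : DecidableRel (fanGraph n).Adj := fun v w =>
  inferInstanceAs (Decidable (v ≠ w ∧ (v = 0 ∨ w = 0 ∨ (v.val - 1) / 2 = (w.val - 1) / 2)))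

def seven {X : Type*} (x0 x1 x2 x3 x4 x5 x6 : X) : Fin 7 → X := fun i =>
  match i with
  | 0 => x0 | 1 => x1 | 2 => x2 | 3 => x3 | 4 => x4 | 5 => x5 | 6 => x6

lemma containsF3 {B : SimpleGraph (Fin 14)} {a v₁ p v₂ q d e : Fin 14}
    (n1 : a ≠ v₁) (n2 : a ≠ p) (n3 : a ≠ v₂) (n4 : a ≠ q) (n5 : a ≠ d) (n6 : a ≠ e)
    (n7 : v₁ ≠ p) (n8 : v₁ ≠ v₂) (n9 : v₁ ≠ q) (n10 : v₁ ≠ d) (n11 : v₁ ≠ e)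
    (n12 : p ≠ v₂) (n13 : p ≠ q) (n14 : p ≠ d) (n15 : p ≠ e)
    (n16 : v₂ ≠ q) (n17 : v₂ ≠ d) (n18 : v₂ ≠ e)
    (n19 : q ≠ d) (n20 : q ≠ e) (n21 : d ≠ e)
    (h01 : B.Adj a v₁) (h02 : B.Adj a p) (h03 : B.Adj a v₂) (h04 : B.Adj a q)
    (h05 : B.Adj a d) (h06 : B.Adj a e)
    (h12 : B.Adj v₁ p) (h34 : B.Adj v₂ q) (h56 : B.Adj d e) :
    ContainsCopy B (fanGraph 3) := by
  have hinj : Function.Injective (seven a v₁ p v₂ q d e) := by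
    intro i j hij
    fin_cases i <;> fin_cases j <;> simp_all [seven]
  refine ⟨⟨seven a v₁ p v₂ q d e, hinj⟩, ?_⟩
  intro i j h
  fin_cases i <;> fin_cases j <;>
    first
    | exact absurd h (by decide)
    | exact h01 | exact h02 | exact h03 | exact h04 | exact h05 | exact h06
    | exact h12 | exact h34 | exact h56
    | exact h01.symm | exact h02.symm | exact h03.symm | exact h04.symm
    | exact h05.symm | exact h06.symm
    | exact h12.symm | exact h34.symm | exact h56.symm

/-- In a red-blue coloring of `K₁₄` with no monochromatic `F₃` and a blue `K₅` on
a 5-set `H`: if two distinct vertices outside `H` have a common blue neighbor in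
`H` and each has at least 2 blue neighbors in `H`, then the union of their blue
neighborhoods in `H` has exactly 2 elements. -/
theorem blue_nbhd_union_eq_two (R : SimpleGraph (Fin 14))
    (hred : ¬ ContainsCopy R (fanGraph 3)) (hblue : ¬ ContainsCopy Rᶜ (fanGraph 3))
    (H : Finset (Fin 14)) (hH : H.card = 5)
    (hK5 : ∀ a ∈ H, ∀ b ∈ H, a ≠ b → Rᶜ.Adj a b)
    (v₁ v₂ : Fin 14) (hv₁ : v₁ ∉ H) (hv₂ : v₂ ∉ H) (hne : v₁ ≠ v₂)
    (hcommon : 1 ≤ ({h : Fin 14 | h ∈ H ∧ Rᶜ.Adj v₁ h} ∩ {h : Fin 14 | h ∈ H ∧ Rᶜ.Adj v₂ h}).ncard)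
    (h₁ : 2 ≤ {h : Fin 14 | h ∈ H ∧ Rᶜ.Adj v₁ h}.ncard)
    (h₂ : 2 ≤ {h : Fin 14 | h ∈ H ∧ Rᶜ.Adj v₂ h}.ncard) :
    ({h : Fin 14 | h ∈ H ∧ Rᶜ.Adj v₁ h} ∪ {h : Fin 14 | h ∈ H ∧ Rᶜ.Adj v₂ h}).ncard = 2 := by
  set N₁ : Set (Fin 14) := {h | h ∈ H ∧ Rᶜ.Adj v₁ h} with hN₁
  set N₂ : Set (Fin 14) := {h | h ∈ H ∧ Rᶜ.Adj v₂ h} with hN₂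
  have hge : 2 ≤ (N₁ ∪ N₂).ncard :=
    le_trans h₁ (Set.ncard_le_ncard Set.subset_union_left (Set.toFinite _))
  have hle : (N₁ ∪ N₂).ncard ≤ 2 := by
    by_contra hgt
    push_neg at hgt
    -- common blue neighbor a
    obtain ⟨a, haN⟩ : (N₁ ∩ N₂).Nonempty := Set.nonempty_of_ncard_ne_zero (by omega)
    have ha1 : a ∈ N₁ := haN.1
    have ha2 : a ∈ N₂ := haN.2
    -- p ∈ N₁ \ {a}
    have hp : ∃ p ∈ N₁, p ≠ a := by
      by_contra hc; push_neg at hc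
      have hsub : N₁ ⊆ {a} := fun x hx => hc x hx
      have := Set.ncard_le_ncard hsub (Set.finite_singleton a)
      rw [Set.ncard_singleton] at this
      omega
    obtain ⟨p₀, hpN₀, hpa₀⟩ := hp
    have hq : ∃ q ∈ N₂, q ≠ a := by
      by_contra hc; push_neg at hc
      have hsub : N₂ ⊆ {a} := fun x hx => hc x hx
      have := Set.ncard_le_ncard hsub (Set.finite_singleton a)
      rw [Set.ncard_singleton] at this
      omega
    obtain ⟨q₀, hqN₀, hqa₀⟩ := hq
    have key : ∃ p q, p ∈ N₁ ∧ q ∈ N₂ ∧ p ≠ a ∧ q ≠ a ∧ p ≠ q := by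
      by_cases hpq : p₀ = q₀
      · -- find a third element of the union
        have hns : ¬ (N₁ ∪ N₂ ⊆ {a, p₀}) := by
          intro hsub
          have hc := Set.ncard_le_ncard hsub (Set.toFinite _)
          have : ({a, p₀} : Set (Fin 14)).ncard ≤ 2 := by
            apply le_trans (Set.ncard_insert_le _ _)
            simp [Set.ncard_singleton]
          omega
        obtain ⟨z, hz, hz'⟩ := Set.not_subset.mp hns
        simp only [Set.mem_insert_iff, Set.mem_singleton_iff, not_or] at hz'
        rcases hz with hz1 | hz2
        · exact ⟨z, q₀, hz1, hqN₀, hz'.1, hqa₀, by rw [← hpq]; exact hz'.2⟩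
        · exact ⟨p₀, z, hpN₀, hz2, hpa₀, hz'.1, fun h => hz'.2 h.symm⟩
      · exact ⟨p₀, q₀, hpN₀, hqN₀, hpa₀, hqa₀, hpq⟩
    obtain ⟨p, q, hpN, hqN, hpa, hqa, hpq⟩ := key
    -- memberships in H
    have haH : a ∈ H := ha1.1
    have hpH : p ∈ H := hpN.1
    have hqH : q ∈ H := hqN.1
    -- the remaining two vertices of H
    have hsub3 : ({a, p, q} : Finset (Fin 14)) ⊆ H := by
      intro x hx
      simp only [Finset.mem_insert, Finset.mem_singleton] at hx
      rcases hx with rfl | rfl | rfl <;> assumption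
    have hcard3 : ({a, p, q} : Finset (Fin 14)).card = 3 := by
      rw [Finset.card_insert_of_notMem (by simp [hpa.symm, hqa.symm, Ne.symm]),
        Finset.card_insert_of_notMem (by simp [hpq])]
      rfl
    have hT : (H \ ({a, p, q} : Finset (Fin 14))).card = 2 := by
      rw [Finset.card_sdiff_of_subset hsub3, hH, hcard3]
    obtain ⟨d, e, hde, hdeT⟩ := Finset.card_eq_two.mp hT
    have hdT : d ∈ H \ ({a, p, q} : Finset (Fin 14)) := by rw [hdeT]; simp
    have heT : e ∈ H \ ({a, p, q} : Finset (Fin 14)) := by rw [hdeT]; simp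
    simp only [Finset.mem_sdiff, Finset.mem_insert, Finset.mem_singleton, not_or] at hdT heT
    obtain ⟨hdH, hda, hdp, hdq⟩ := hdT
    obtain ⟨heH, hea, hep, heq⟩ := heT
    -- distinctness from v₁, v₂
    have hv₁H : ∀ x ∈ H, v₁ ≠ x := fun x hx h => hv₁ (h ▸ hx)
    have hv₂H : ∀ x ∈ H, v₂ ≠ x := fun x hx h => hv₂ (h ▸ hx)
    exact hblue (containsF3
      (Ne.symm (hv₁H a haH)) (Ne.symm hpa) (Ne.symm (hv₂H a haH)) (Ne.symm hqa)
      (Ne.symm hda) (Ne.symm hea)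
      (hv₁H p hpH) hne (hv₁H q hqH) (hv₁H d hdH) (hv₁H e heH)
      (Ne.symm (hv₂H p hpH)) hpq (Ne.symm hdp) (Ne.symm hep)
      (hv₂H q hqH) (hv₂H d hdH) (hv₂H e heH)
      (Ne.symm hdq) (Ne.symm heq)
      hde
      ha1.2.symm (hK5 a haH p hpH (Ne.symm hpa)) ha2.2.symm
      (hK5 a haH q hqH (Ne.symm hqa))
      (hK5 a haH d hdH (Ne.symm hda)) (hK5 a haH e heH (Ne.symm hea))
      hpN.2 hqN.2 (hK5 d hdH e heH hde))
  omega
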